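/- (Fixed-action Bellman solution.) Fix θ ∈ (0,1)\{1/2} and γ ∈ (0,1). Consider an action with observation likelihoods p(y=1|s=+1) = θ, p(y=1|s=−1) = 1−θ, so that under belief β ∈ (−1,1) the win probability is p_β(1) = (1 + β(2θ−1))/2 and the Bayesian belief updates are β'_1 = (β + (2θ−1))/(1 + β(2θ−1)) after y=1 and β'_0 = (β − (2θ−1))/(1 − β(2θ−1)) after y=0. Let ζ ∈ ℝ satisfy (1−θ)^ζ θ^{1−ζ} + θ^ζ (1−θ)^{1−ζ} = 1/γ and let C ∈ ℝ be arbitrary. Then the function v(β) = (1 + β(2θ−1))/(2(1−γ)) + C ((1−β)/2)^ζ ((1+β)/2)^{1−ζ} satisfies, for all β ∈ (−1,1), the fixed-action Bellman recursion v(β) = (1 + β(2θ−1))/2 + γ [ p_β(1) v(β'_1) + (1 − p_β(1)) v(β'_0) ]. -/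

import Mathlib

/-!
Fixed-action Bellman solution in the two-state Bernoulli bandit.  For an
action with likelihoods `p(y=1|s=+1) = θ`, `p(y=1|s=−1) = 1−θ`, belief
parameter `β ∈ (−1,1)`, win probability `p_β(1) = (1 + β(2θ−1))/2` and
Bayesian updates `β'_1 = (β + (2θ−1))/(1 + β(2θ−1))`,
`β'_0 = (β − (2θ−1))/(1 − β(2θ−1))`, the ansatz
`v(β) = (1 + β(2θ−1))/(2(1−γ)) + C ((1−β)/2)^ζ ((1+β)/2)^{1−ζ}`
solves the fixed-action Bellman recursion whenever `ζ` solves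
`(1−θ)^ζ θ^{1−ζ} + θ^ζ (1−θ)^{1−ζ} = 1/γ`.
-/

/-- The ansatz value function
`v(β) = (1 + β(2θ−1))/(2(1−γ)) + C ((1−β)/2)^ζ ((1+β)/2)^{1−ζ}`. -/
noncomputable def vSol (θ γ ζ C β : ℝ) : ℝ :=
  (1 + β * (2 * θ - 1)) / (2 * (1 - γ))
    + C * ((1 - β) / 2) ^ ζ * ((1 + β) / 2) ^ (1 - ζ)


private lemma bellman_aux (p a b X Y t u L C : ℝ) (ha : a ≠ 0) (hb : b ≠ 0)
    (hpp : a * b = p) :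
    p * (L + C * (X * t / a) * (Y * u / b)) = p * L + C * X * Y * (t * u) := by
  field_simp
  linear_combination (-(C * X * t * Y * u)) * hpp

theorem fixed_action_bellman_solution
    (θ γ ζ C : ℝ) (hθ0 : 0 < θ) (hθ1 : θ < 1) (hθ : θ ≠ 1 / 2)
    (hγ : γ ∈ Set.Ioo (0 : ℝ) 1)
    (hζ : (1 - θ) ^ ζ * θ ^ (1 - ζ) + θ ^ ζ * (1 - θ) ^ (1 - ζ) = 1 / γ) :
    ∀ β ∈ Set.Ioo (-1 : ℝ) 1,
      vSol θ γ ζ C β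
        = (1 + β * (2 * θ - 1)) / 2
          + γ * ((1 + β * (2 * θ - 1)) / 2
                  * vSol θ γ ζ C ((β + (2 * θ - 1)) / (1 + β * (2 * θ - 1)))
                + (1 - (1 + β * (2 * θ - 1)) / 2)
                  * vSol θ γ ζ C ((β - (2 * θ - 1)) / (1 - β * (2 * θ - 1)))) := by
  obtain ⟨hγ0, hγ1⟩ := hγ
  intro β hβ
  obtain ⟨hβm, hβp⟩ := hβ
  have hθ2 : (0:ℝ) < 1 - θ := by linarith
  have hγne : (1:ℝ) - γ ≠ 0 := by linarith
  have hbk1 : β * (2 * θ - 1) < 1 := by nlinarith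
  have hbk2 : -1 < β * (2 * θ - 1) := by nlinarith
  have hp : (0:ℝ) < 1 + β * (2 * θ - 1) := by linarith
  have hq : (0:ℝ) < 1 - β * (2 * θ - 1) := by linarith
  set β1 : ℝ := (β + (2 * θ - 1)) / (1 + β * (2 * θ - 1)) with hβ1def
  set β0 : ℝ := (β - (2 * θ - 1)) / (1 - β * (2 * θ - 1)) with hβ0def
  have hXnn : (0:ℝ) ≤ (1 - β) / 2 := by linarith
  have hYnn : (0:ℝ) ≤ (1 + β) / 2 := by linarith
  have hp2 : (0:ℝ) < (1 + β * (2 * θ - 1)) / 2 := by linarith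
  have hq2 : (0:ℝ) < (1 - β * (2 * θ - 1)) / 2 := by linarith
  have hA1 : (1 - β1) / 2 = ((1 - β) / 2) * ((1 - θ) / ((1 + β * (2 * θ - 1)) / 2)) := by
    rw [hβ1def]; field_simp; ring
  have hB1 : (1 + β1) / 2 = ((1 + β) / 2) * (θ / ((1 + β * (2 * θ - 1)) / 2)) := by
    rw [hβ1def]; field_simp; ring
  have hA0 : (1 - β0) / 2 = ((1 - β) / 2) * (θ / ((1 - β * (2 * θ - 1)) / 2)) := by
    rw [hβ0def]; field_simp; ring
  have hB0 : (1 + β0) / 2 = ((1 + β) / 2) * ((1 - θ) / ((1 - β * (2 * θ - 1)) / 2)) := by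
    rw [hβ0def]; field_simp; ring
  have hpz : (0:ℝ) < ((1 + β * (2 * θ - 1)) / 2) ^ ζ := Real.rpow_pos_of_pos hp2 ζ
  have hpz' : (0:ℝ) < ((1 + β * (2 * θ - 1)) / 2) ^ (1 - ζ) := Real.rpow_pos_of_pos hp2 (1-ζ)
  have hqz : (0:ℝ) < ((1 - β * (2 * θ - 1)) / 2) ^ ζ := Real.rpow_pos_of_pos hq2 ζ
  have hqz' : (0:ℝ) < ((1 - β * (2 * θ - 1)) / 2) ^ (1 - ζ) := Real.rpow_pos_of_pos hq2 (1-ζ)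
  have hpp : ((1 + β * (2 * θ - 1)) / 2) ^ ζ * ((1 + β * (2 * θ - 1)) / 2) ^ (1 - ζ)
      = (1 + β * (2 * θ - 1)) / 2 := by
    rw [← Real.rpow_add hp2]; simp
  have hqq : ((1 - β * (2 * θ - 1)) / 2) ^ ζ * ((1 - β * (2 * θ - 1)) / 2) ^ (1 - ζ)
      = (1 - β * (2 * θ - 1)) / 2 := by
    rw [← Real.rpow_add hq2]; simp
  have e1 : ((1 - β1) / 2) ^ ζ
      = ((1 - β) / 2) ^ ζ * (1 - θ) ^ ζ / ((1 + β * (2 * θ - 1)) / 2) ^ ζ := by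
    rw [hA1, Real.mul_rpow hXnn (by positivity), Real.div_rpow hθ2.le hp2.le]; ring
  have e2 : ((1 + β1) / 2) ^ (1 - ζ)
      = ((1 + β) / 2) ^ (1 - ζ) * θ ^ (1 - ζ) / ((1 + β * (2 * θ - 1)) / 2) ^ (1 - ζ) := by
    rw [hB1, Real.mul_rpow hYnn (by positivity), Real.div_rpow hθ0.le hp2.le]; ring
  have e3 : ((1 - β0) / 2) ^ ζ
      = ((1 - β) / 2) ^ ζ * θ ^ ζ / ((1 - β * (2 * θ - 1)) / 2) ^ ζ := by
    rw [hA0, Real.mul_rpow hXnn (by positivity), Real.div_rpow hθ0.le hq2.le]; ring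
  have e4 : ((1 + β0) / 2) ^ (1 - ζ)
      = ((1 + β) / 2) ^ (1 - ζ) * (1 - θ) ^ (1 - ζ) / ((1 - β * (2 * θ - 1)) / 2) ^ (1 - ζ) := by
    rw [hB0, Real.mul_rpow hYnn (by positivity), Real.div_rpow hθ2.le hq2.le]; ring
  have h1 : (1 + β * (2 * θ - 1)) / 2 * vSol θ γ ζ C β1
      = (1 + β * (2 * θ - 1)) / 2 * ((1 + β1 * (2 * θ - 1)) / (2 * (1 - γ)))
        + C * ((1 - β) / 2) ^ ζ * ((1 + β) / 2) ^ (1 - ζ) * ((1 - θ) ^ ζ * θ ^ (1 - ζ)) := by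
    rw [vSol, e1, e2]
    exact bellman_aux _ _ _ _ _ _ _ _ _ (ne_of_gt hpz) (ne_of_gt hpz') hpp
  have h0 : (1 - (1 + β * (2 * θ - 1)) / 2) * vSol θ γ ζ C β0
      = (1 - (1 + β * (2 * θ - 1)) / 2) * ((1 + β0 * (2 * θ - 1)) / (2 * (1 - γ)))
        + C * ((1 - β) / 2) ^ ζ * ((1 + β) / 2) ^ (1 - ζ) * (θ ^ ζ * (1 - θ) ^ (1 - ζ)) := by
    rw [vSol, e3, e4]
    have := bellman_aux ((1 - β * (2 * θ - 1)) / 2)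
      (((1 - β * (2 * θ - 1)) / 2) ^ ζ) (((1 - β * (2 * θ - 1)) / 2) ^ (1 - ζ))
      (((1 - β) / 2) ^ ζ) (((1 + β) / 2) ^ (1 - ζ)) (θ ^ ζ) ((1 - θ) ^ (1 - ζ))
      ((1 + β0 * (2 * θ - 1)) / (2 * (1 - γ))) C (ne_of_gt hqz) (ne_of_gt hqz') hqq
    rw [show (1 - (1 + β * (2 * θ - 1)) / 2) = (1 - β * (2 * θ - 1)) / 2 from by ring]
    exact this
  have hl1 : (1 + β * (2 * θ - 1)) / 2 * ((1 + β1 * (2 * θ - 1)) / (2 * (1 - γ)))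
      = ((1 + β * (2 * θ - 1)) / 2 + (β + (2 * θ - 1)) * (2 * θ - 1) / 2) / (2 * (1 - γ)) := by
    rw [hβ1def]; field_simp
  have hl0 : (1 - (1 + β * (2 * θ - 1)) / 2) * ((1 + β0 * (2 * θ - 1)) / (2 * (1 - γ)))
      = ((1 - β * (2 * θ - 1)) / 2 + (β - (2 * θ - 1)) * (2 * θ - 1) / 2) / (2 * (1 - γ)) := by
    rw [hβ0def]; field_simp; ring
  have hζ' : γ * ((1 - θ) ^ ζ * θ ^ (1 - ζ) + θ ^ ζ * (1 - θ) ^ (1 - ζ)) = 1 := by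
    rw [hζ]; field_simp
  rw [h1, h0, hl1, hl0, vSol]
  field_simp
  linear_combination (-4 * (1 - γ) * C * ((1 - β) / 2) ^ ζ * ((1 + β) / 2) ^ (1 - ζ)) * hζ'
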